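/- Let X be a compact Hausdorff space, E a Banach space over 𝕂 ∈ {ℝ, ℂ}, and A a closed 𝕂-linear subspace of C(X,E). Then every strong boundary point of A is a Bishop point of A, i.e., Θ(A) ⊆ Ω(A). -/

import Mathlib

open Set Metric

set_option maxHeartbeats 1000000

variable {𝕂 : Type*} [RCLike 𝕂]
variable {X : Type*} [TopologicalSpace X] [CompactSpace X] [T2Space X]
variable {E : Type*} [NormedAddCommGroup E] [NormedSpace ℝ E] [NormedSpace 𝕂 E]
  [IsScalarTower ℝ 𝕂 E] [CompleteSpace E]

/-- The set `V^A_{x,K} = {f ∈ S(A) : f(x) ∈ K}`. -/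
def Vset (A : Subspace 𝕂 C(X, E)) (x : X) (K : Set E) : Set C(X, E) :=
  {f | f ∈ A ∧ ‖f‖ = 1 ∧ f x ∈ K}

/-- The set `Θ(A)` of strong boundary points of a set `A` of functions in `C(X,E)`. -/
def strongBoundaryPoints (A : Set C(X, E)) : Set X :=
  {x | ∀ U ∈ nhds x, ∀ ε : ℝ, 0 < ε → ∀ u : E, ‖u‖ = 1 →
    ∃ f ∈ A, ‖f‖ = 1 ∧ f x = u ∧ ∀ y, y ∉ U → ‖f y‖ < ε}

/-- The set `Ω(A)` of Bishop points of `A`: points `x` such that for every unit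
vector `u` and every `f ∈ A` with `f x = 0` one has `f = s • (g - h)` for some
`s > 0` and `g, h ∈ V^A_{x,{u}}`. -/
def bishopPoints (A : Subspace 𝕂 C(X, E)) : Set X :=
  {x | ∀ u : E, ‖u‖ = 1 → ∀ f ∈ A, f x = 0 →
    ∃ s : ℝ, 0 < s ∧ ∃ g ∈ Vset A x {u}, ∃ h ∈ Vset A x {u}, f = s • (g - h)}

lemma nat_exists_min {p : ℕ → Prop} (h : ∃ n, p n) : ∃ m, p m ∧ ∀ k, k < m → ¬ p k := by
  classical
  exact ⟨Nat.find h, Nat.find_spec h, fun k hk => Nat.find_min h hk⟩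

lemma half_sum_range (m : ℕ) : ∑ i ∈ Finset.range m, (1/2:ℝ)^(i+1) = 1 - (1/2)^m := by
  induction m with
  | zero => simp
  | succ k ih => rw [Finset.sum_range_succ, ih]; ring

/-- Every strong boundary point of a closed subspace `A` is a Bishop point:
`Θ(A) ⊆ Ω(A)`. -/
theorem stmt6 (A : Subspace 𝕂 C(X, E)) (hA : IsClosed (A : Set C(X, E))) :
    strongBoundaryPoints (A : Set C(X, E)) ⊆ bishopPoints A := by
  intro x hx u hu f hfA hfx
  by_cases hf0 : f = 0
  · obtain ⟨g, hgA, hgn, hgx, -⟩ := hx Set.univ Filter.univ_mem 1 one_pos u hu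
    exact ⟨1, one_pos, g, ⟨hgA, hgn, by simp [hgx]⟩, g, ⟨hgA, hgn, by simp [hgx]⟩,
      by simp [hf0]⟩
  · have hδ : (0:ℝ) < ‖f‖ := norm_pos_iff.mpr hf0
    set δ : ℝ := ‖f‖ with hδdef
    -- choose peaking functions
    have hex : ∀ n : ℕ, ∃ gn : C(X,E), gn ∈ A ∧ ‖gn‖ = 1 ∧ gn x = u ∧
        ∀ y, ¬ (‖f y‖ < (1/2:ℝ)^(n+1) * δ) → ‖gn y‖ < (1/4:ℝ)^(n+1) := by
      intro n
      have hUopen : IsOpen {y | ‖f y‖ < (1/2:ℝ)^(n+1) * δ} :=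
        isOpen_lt (by fun_prop) continuous_const
      have hUmem : {y | ‖f y‖ < (1/2:ℝ)^(n+1) * δ} ∈ nhds x := by
        refine hUopen.mem_nhds ?_
        have h0 : ‖f x‖ = 0 := by simp [hfx]
        simp only [Set.mem_setOf_eq, h0]
        positivity
      obtain ⟨gn, h1, h2, h3, h4⟩ := hx _ hUmem ((1/4:ℝ)^(n+1)) (by positivity) u hu
      exact ⟨gn, h1, h2, h3, fun y hy => h4 y hy⟩
    choose G hGA hGn hGx hGs using hex
    -- summability of weights
    have hw : Summable (fun n : ℕ => (1/2:ℝ)^(n+1)) := by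
      have := (summable_geometric_of_lt_one (by norm_num : (0:ℝ) ≤ 1/2)
        (by norm_num : (1/2:ℝ) < 1)).mul_left (1/2)
      simpa [pow_succ'] using this
    have hwsum : ∑' n : ℕ, (1/2:ℝ)^(n+1) = 1 := by
      have h1 : ∑' n : ℕ, (1/2:ℝ)^(n+1) = ∑' n : ℕ, (1/2:ℝ) * (1/2:ℝ)^n := by
        refine tsum_congr fun n => ?_
        rw [pow_succ']
      rw [h1, tsum_mul_left, tsum_geometric_of_lt_one (by norm_num) (by norm_num)]
      norm_num
    have hsumG : Summable (fun n : ℕ => (1/2:ℝ)^(n+1) • G n) := by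
      refine Summable.of_norm ?_
      have he : (fun n : ℕ => ‖(1/2:ℝ)^(n+1) • G n‖) = fun n : ℕ => (1/2:ℝ)^(n+1) := by
        funext n
        rw [norm_smul, hGn n, mul_one, Real.norm_eq_abs, abs_of_nonneg (by positivity)]
      rw [he]; exact hw
    set g : C(X, E) := ∑' n : ℕ, (1/2:ℝ)^(n+1) • G n with hgdef
    have hgHas : HasSum (fun n : ℕ => (1/2:ℝ)^(n+1) • G n) g := hsumG.hasSum
    have hgA : g ∈ A := by
      refine hA.mem_of_tendsto hgHas ?_
      filter_upwards with t
      exact Submodule.sum_mem A fun n _ => A.smul_of_tower_mem _ (hGA n)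
    have hEval : ∀ y : X, HasSum (fun n : ℕ => (1/2:ℝ)^(n+1) • G n y) (g y) := by
      intro y
      have := (ContinuousMap.evalCLM (M := E) ℝ y).hasSum hgHas
      simpa [ContinuousMap.evalCLM] using this
    have hgx : g x = u := by
      have h1 : HasSum (fun n : ℕ => (1/2:ℝ)^(n+1) • u) (g x) := by
        have := hEval x
        simpa [hGx] using this
      have h2 : HasSum (fun n : ℕ => (1/2:ℝ)^(n+1) • u) u := by
        have := hw.hasSum.smul_const (a := u)
        rwa [hwsum, one_smul] at this
      exact h1.unique h2
    -- the key pointwise bound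
    set s : ℝ := 2 * δ with hsdef
    have hs : (0:ℝ) < s := by positivity
    have key : ∀ y : X, ‖g y‖ + s⁻¹ * ‖f y‖ ≤ 1 := by
      intro y
      have hSnorm : Summable (fun n : ℕ => (1/2:ℝ)^(n+1) * ‖G n y‖) := by
        refine Summable.of_nonneg_of_le (fun n => by positivity) (fun n => ?_) hw
        have : ‖G n y‖ ≤ 1 := by
          have := ContinuousMap.norm_coe_le_norm (G n) y
          rwa [hGn n] at this
        nlinarith [pow_nonneg (by norm_num : (0:ℝ) ≤ 1/2) (n+1)]
      have hgy_le : ‖g y‖ ≤ ∑' n : ℕ, (1/2:ℝ)^(n+1) * ‖G n y‖ := by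
        have h1 : ‖g y‖ ≤ ∑' n : ℕ, ‖(1/2:ℝ)^(n+1) • G n y‖ := by
          rw [← (hEval y).tsum_eq]
          refine norm_tsum_le_tsum_norm ?_
          have he : (fun n : ℕ => ‖(1/2:ℝ)^(n+1) • G n y‖)
              = fun n : ℕ => (1/2:ℝ)^(n+1) * ‖G n y‖ := by
            funext n
            rw [norm_smul, Real.norm_eq_abs, abs_of_nonneg (by positivity)]
          rw [he]; exact hSnorm
        calc ‖g y‖ ≤ ∑' n : ℕ, ‖(1/2:ℝ)^(n+1) • G n y‖ := h1
          _ = ∑' n : ℕ, (1/2:ℝ)^(n+1) * ‖G n y‖ := by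
              refine tsum_congr fun n => ?_
              rw [norm_smul, Real.norm_eq_abs, abs_of_nonneg (by positivity)]
      by_cases hfy : f y = 0
      · have : ∑' n : ℕ, (1/2:ℝ)^(n+1) * ‖G n y‖ ≤ ∑' n : ℕ, (1/2:ℝ)^(n+1) := by
          refine Summable.tsum_le_tsum (fun n => ?_) hSnorm hw
          have : ‖G n y‖ ≤ 1 := by
            have := ContinuousMap.norm_coe_le_norm (G n) y
            rwa [hGn n] at this
          nlinarith [pow_nonneg (by norm_num : (0:ℝ) ≤ 1/2) (n+1)]
        rw [hfy]
        simp only [norm_zero, mul_zero, add_zero]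
        calc ‖g y‖ ≤ ∑' n : ℕ, (1/2:ℝ)^(n+1) * ‖G n y‖ := hgy_le
          _ ≤ ∑' n : ℕ, (1/2:ℝ)^(n+1) := this
          _ = 1 := hwsum
      · -- find m
        have hfy' : 0 < ‖f y‖ := norm_pos_iff.mpr hfy
        have hP : ∃ n : ℕ, ¬ (‖f y‖ < (1/2:ℝ)^(n+1) * δ) := by
          obtain ⟨n, hn⟩ := exists_pow_lt_of_lt_one (div_pos hfy' hδ)
            (by norm_num : (1/2:ℝ) < 1)
          refine ⟨n, not_lt.mpr ?_⟩
          have h1 : (1/2:ℝ)^(n+1) ≤ (1/2:ℝ)^n :=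
            pow_le_pow_of_le_one (by norm_num) (by norm_num) (by omega)
          have h2 : (1/2:ℝ)^n * δ < ‖f y‖ := by
            rw [lt_div_iff₀ hδ] at hn; linarith
          nlinarith
        obtain ⟨m, hm1, hm2⟩ : ∃ m : ℕ, (1/2:ℝ)^(m+1) * δ ≤ ‖f y‖ ∧
            ‖f y‖ ≤ (1/2:ℝ)^m * δ := by
          obtain ⟨m, hPm, hPmin⟩ := nat_exists_min hP
          refine ⟨m, not_lt.mp hPm, ?_⟩
          rcases Nat.eq_zero_or_pos m with h0 | hpos
          · rw [h0]
            simpa using ContinuousMap.norm_coe_le_norm f y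
          · have hmin := hPmin (m - 1) (by omega)
            push_neg at hmin
            have heq : m - 1 + 1 = m := by omega
            rw [heq] at hmin
            exact hmin.le
        -- termwise bound
        have hterm : ∀ n : ℕ, (1/2:ℝ)^(n+1) * ‖G n y‖
            ≤ (if n < m then (1/2:ℝ)^(n+1) else (1/8:ℝ)^(n+1)) := by
          intro n
          by_cases h : n < m
          · rw [if_pos h]
            have : ‖G n y‖ ≤ 1 := by
              have := ContinuousMap.norm_coe_le_norm (G n) y
              rwa [hGn n] at this
            nlinarith [pow_nonneg (by norm_num : (0:ℝ) ≤ 1/2) (n+1)]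
          · rw [if_neg h]
            have hmn : m ≤ n := le_of_not_gt h
            have hnotin : ¬ (‖f y‖ < (1/2:ℝ)^(n+1) * δ) := by
              intro hcon
              have h1 : (1/2:ℝ)^(n+1) ≤ (1/2:ℝ)^(m+1) :=
                pow_le_pow_of_le_one (by norm_num) (by norm_num) (by omega)
              nlinarith
            have hsmall : ‖G n y‖ ≤ (1/4:ℝ)^(n+1) := (hGs n y hnotin).le
            calc (1/2:ℝ)^(n+1) * ‖G n y‖ ≤ (1/2:ℝ)^(n+1) * (1/4:ℝ)^(n+1) := by
                  have : (0:ℝ) ≤ (1/2:ℝ)^(n+1) := by positivity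
                  nlinarith
              _ = (1/8:ℝ)^(n+1) := by rw [← mul_pow]; norm_num
        have hb : Summable (fun n : ℕ => if n < m then (1/2:ℝ)^(n+1) else (1/8:ℝ)^(n+1)) := by
          refine Summable.of_nonneg_of_le (fun n => by positivity) (fun n => ?_) hw
          split
          · exact le_rfl
          · exact pow_le_pow_left₀ (by norm_num) (by norm_num) (n+1)
        have hbsum : ∑' n : ℕ, (if n < m then (1/2:ℝ)^(n+1) else (1/8:ℝ)^(n+1))
            = (1 - (1/2:ℝ)^m) + (1/8:ℝ)^(m+1) * (1 - 1/8)⁻¹ := by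
          rw [← Summable.sum_add_tsum_nat_add m hb]
          congr 1
          · rw [Finset.sum_congr rfl (fun i hi => if_pos (Finset.mem_range.mp hi))]
            exact half_sum_range m
          · have he : ∀ i : ℕ, (if i + m < m then (1/2:ℝ)^(i+m+1) else (1/8:ℝ)^(i+m+1))
                = (1/8:ℝ)^(m+1) * (1/8:ℝ)^i := by
              intro i
              rw [if_neg (by omega)]
              ring
            rw [tsum_congr he, tsum_mul_left,
              tsum_geometric_of_lt_one (by norm_num) (by norm_num)]
        have hfsbound : s⁻¹ * ‖f y‖ ≤ (1/2:ℝ)^(m+1) := by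
          rw [hsdef]
          have h1 : (2 * δ)⁻¹ * ‖f y‖ ≤ (2 * δ)⁻¹ * ((1/2:ℝ)^m * δ) := by
            have : (0:ℝ) ≤ (2*δ)⁻¹ := by positivity
            nlinarith
          have h2 : (2 * δ)⁻¹ * ((1/2:ℝ)^m * δ) = (1/2:ℝ)^(m+1) := by
            field_simp
            ring
          linarith
        have hgy2 : ‖g y‖ ≤ (1 - (1/2:ℝ)^m) + (1/8:ℝ)^(m+1) * (1 - 1/8)⁻¹ := by
          rw [← hbsum]
          exact le_trans hgy_le (Summable.tsum_le_tsum hterm hSnorm hb)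
        have h8 : (1/8:ℝ)^m ≤ (1/2:ℝ)^m :=
          pow_le_pow_left₀ (by norm_num) (by norm_num) m
        have h8' : (0:ℝ) ≤ (1/8:ℝ)^m := by positivity
        have e1 : (1/2:ℝ)^(m+1) = (1/2:ℝ)^m * (1/2) := pow_succ _ _
        have e2 : (1/8:ℝ)^(m+1) * ((1:ℝ) - 1/8)⁻¹ = (1/7) * (1/8:ℝ)^m := by
          rw [pow_succ]
          norm_num
          ring
        rw [e2] at hgy2
        rw [e1] at hfsbound
        linarith [hgy2, hfsbound, h8]
    -- construct h
    set h : C(X,E) := g - (algebraMap ℝ 𝕂 s⁻¹) • f with hhdef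
    have hhy : ∀ y : X, h y = g y - s⁻¹ • f y := by
      intro y
      simp only [hhdef, ContinuousMap.sub_apply, ContinuousMap.smul_apply]
      rw [algebraMap_smul]
    have hhA : h ∈ A := A.sub_mem hgA (A.smul_mem _ hfA)
    have hhx : h x = u := by
      rw [hhy x, hfx, smul_zero, sub_zero, hgx]
    have hgnorm : ‖g‖ = 1 := by
      refine le_antisymm ((ContinuousMap.norm_le g zero_le_one).mpr fun y => ?_) ?_
      · have := key y
        have h0 : 0 ≤ s⁻¹ * ‖f y‖ := by positivity
        linarith
      · have := ContinuousMap.norm_coe_le_norm g x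
        rw [hgx, hu] at this
        exact this
    have hhnorm : ‖h‖ = 1 := by
      refine le_antisymm ((ContinuousMap.norm_le h zero_le_one).mpr fun y => ?_) ?_
      · rw [hhy y]
        calc ‖g y - s⁻¹ • f y‖ ≤ ‖g y‖ + ‖s⁻¹ • f y‖ := norm_sub_le _ _
          _ = ‖g y‖ + s⁻¹ * ‖f y‖ := by
              rw [norm_smul, Real.norm_eq_abs, abs_of_nonneg (by positivity)]
          _ ≤ 1 := key y
      · have := ContinuousMap.norm_coe_le_norm h x
        rw [hhx, hu] at this
        exact this
    refine ⟨s, hs, g, ⟨hgA, hgnorm, by simp [hgx]⟩, h, ⟨hhA, hhnorm, by simp [hhx]⟩, ?_⟩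
    ext y
    rw [ContinuousMap.smul_apply, ContinuousMap.sub_apply, hhy y]
    rw [sub_sub_cancel, smul_smul, mul_inv_cancel₀ hs.ne', one_smul]
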